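/- For nontrivial bounded lattices A and B each containing an element distinct from 0 and 1, the number of filters of the horizontal sum A ⊞ B equals |Filt(A)| + |Filt(B)| − 2, and dually for ideals. -/

import Mathlib

/-- A filter of a lattice: a nonempty, upward-closed subset closed under binary meets. -/
def IsLatFilter {L : Type*} [Lattice L] (F : Set L) : Prop :=
  F.Nonempty ∧ (∀ x ∈ F, ∀ y : L, x ≤ y → y ∈ F) ∧ (∀ x ∈ F, ∀ y ∈ F, x ⊓ y ∈ F)

/-- An ideal of a lattice: a nonempty, downward-closed subset closed under binary joins. -/
def IsLatIdeal {L : Type*} [Lattice L] (I : Set L) : Prop :=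
  I.Nonempty ∧ (∀ x ∈ I, ∀ y : L, y ≤ x → y ∈ I) ∧ (∀ x ∈ I, ∀ y ∈ I, x ⊔ y ∈ I)

/-- A prime filter: a proper filter such that `x ⊔ y ∈ P` implies `x ∈ P` or `y ∈ P`. -/
def IsPrimeFilter {L : Type*} [Lattice L] (P : Set L) : Prop :=
  IsLatFilter P ∧ P ≠ Set.univ ∧ ∀ x y : L, x ⊔ y ∈ P → x ∈ P ∨ y ∈ P

/-- A prime ideal: a proper ideal such that `x ⊓ y ∈ I` implies `x ∈ I` or `y ∈ I`. -/
def IsPrimeIdeal {L : Type*} [Lattice L] (I : Set L) : Prop :=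
  IsLatIdeal I ∧ I ≠ Set.univ ∧ ∀ x y : L, x ⊓ y ∈ I → x ∈ I ∨ y ∈ I

/-- A lattice congruence: an equivalence relation compatible with `⊔` and `⊓`. -/
def IsLatCong {L : Type*} [Lattice L] (θ : L → L → Prop) : Prop :=
  Equivalence θ ∧ ∀ a b c d : L, θ a b → θ c d → θ (a ⊔ c) (b ⊔ d) ∧ θ (a ⊓ c) (b ⊓ d)

/-- `C` is the horizontal sum of its subsets `A` and `B`: both are bounded sublattices,
they cover `C`, they intersect exactly in `{⊥, ⊤}`, and elements of `A \ {⊥, ⊤}` are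
incomparable with elements of `B \ {⊥, ⊤}`. -/
structure IsHorizSum {C : Type*} [Lattice C] [BoundedOrder C] (A B : Set C) : Prop where
  botA : ⊥ ∈ A
  topA : ⊤ ∈ A
  botB : ⊥ ∈ B
  topB : ⊤ ∈ B
  subA : ∀ x ∈ A, ∀ y ∈ A, x ⊓ y ∈ A ∧ x ⊔ y ∈ A
  subB : ∀ x ∈ B, ∀ y ∈ B, x ⊓ y ∈ B ∧ x ⊔ y ∈ B
  union : A ∪ B = Set.univ
  inter : A ∩ B = {⊥, ⊤}
  incomp : ∀ a ∈ A, a ≠ ⊥ → a ≠ ⊤ → ∀ b ∈ B, b ≠ ⊥ → b ≠ ⊤ → ¬ a ≤ b ∧ ¬ b ≤ a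

/-- A filter of the sublattice `A` of `C`. -/
def IsFilterOf {C : Type*} [Lattice C] (A : Set C) (F : Set C) : Prop :=
  F.Nonempty ∧ F ⊆ A ∧ (∀ x ∈ F, ∀ y ∈ A, x ≤ y → y ∈ F) ∧ (∀ x ∈ F, ∀ y ∈ F, x ⊓ y ∈ F)

/-- An ideal of the sublattice `A` of `C`. -/
def IsIdealOf {C : Type*} [Lattice C] (A : Set C) (I : Set C) : Prop :=
  I.Nonempty ∧ I ⊆ A ∧ (∀ x ∈ I, ∀ y ∈ A, y ≤ x → y ∈ I) ∧ (∀ x ∈ I, ∀ y ∈ I, x ⊔ y ∈ I)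

section Aux

variable {C : Type*} [Lattice C] [BoundedOrder C]

lemma IsHorizSum.symm' {A B : Set C} (h : IsHorizSum A B) : IsHorizSum B A where
  botA := h.botB
  topA := h.topB
  botB := h.botA
  topB := h.topA
  subA := h.subB
  subB := h.subA
  union := by rw [Set.union_comm]; exact h.union
  inter := by rw [Set.inter_comm]; exact h.inter
  incomp := fun b hb hb0 hb1 a ha ha0 ha1 => (h.incomp a ha ha0 ha1 b hb hb0 hb1).symm

lemma IsHorizSum.dual' {A B : Set C} (h : IsHorizSum A B) :
    IsHorizSum (show Set Cᵒᵈ from A) (show Set Cᵒᵈ from B) where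
  botA := h.topA
  topA := h.botA
  botB := h.topB
  topB := h.botB
  subA := fun x hx y hy => ⟨(h.subA x hx y hy).2, (h.subA x hx y hy).1⟩
  subB := fun x hx y hy => ⟨(h.subB x hx y hy).2, (h.subB x hx y hy).1⟩
  union := h.union
  inter := by exact h.inter.trans (Set.pair_comm _ _)
  incomp := fun a ha ha0 ha1 b hb hb0 hb1 =>
    ((h.incomp a ha ha1 ha0 b hb hb1 hb0)).symm

lemma latFilter_top_mem {F : Set C} (hF : IsLatFilter F) : ⊤ ∈ F := by
  obtain ⟨⟨x, hx⟩, hup, _⟩ := hF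
  exact hup x hx ⊤ le_top

lemma latFilter_eq_univ_of_bot {F : Set C} (hF : IsLatFilter F) (h : ⊥ ∈ F) :
    F = Set.univ :=
  Set.eq_univ_of_forall fun y => hF.2.1 ⊥ h y bot_le

lemma isLatFilter_univ : IsLatFilter (Set.univ : Set C) :=
  ⟨⟨⊥, trivial⟩, fun _ _ _ _ => trivial, fun _ _ _ _ => trivial⟩

lemma latFilter_subset {A B : Set C} (hAB : IsHorizSum A B) {F : Set C}
    (hF : IsLatFilter F) (hne : F ≠ Set.univ) : F ⊆ A ∨ F ⊆ B := by
  by_contra h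
  push_neg at h
  obtain ⟨a, haF, haA⟩ := Set.not_subset.1 h.1
  obtain ⟨b, hbF, hbB⟩ := Set.not_subset.1 h.2
  have hbot : ⊥ ∉ F := fun hb => hne (latFilter_eq_univ_of_bot hF hb)
  have haB : a ∈ B := by
    have : a ∈ A ∪ B := hAB.union ▸ Set.mem_univ a
    exact this.resolve_left haA
  have hbA : b ∈ A := by
    have : b ∈ A ∪ B := hAB.union ▸ Set.mem_univ b
    exact this.resolve_right hbB
  have ha0 : a ≠ ⊥ := fun h' => hbot (h' ▸ haF)
  have ha1 : a ≠ ⊤ := fun h' => haA (h' ▸ hAB.topA)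
  have hb0 : b ≠ ⊥ := fun h' => hbot (h' ▸ hbF)
  have hb1 : b ≠ ⊤ := fun h' => hbB (h' ▸ hAB.topB)
  have hmF : a ⊓ b ∈ F := hF.2.2 a haF b hbF
  have hm0 : a ⊓ b ≠ ⊥ := fun h' => hbot (h' ▸ hmF)
  have hmAB : a ⊓ b ∈ A ∪ B := hAB.union ▸ Set.mem_univ _
  rcases hmAB with hmA | hmB
  · have hm1 : a ⊓ b ≠ ⊤ := fun h' => ha1 (top_le_iff.1 (h' ▸ inf_le_left))
    exact (hAB.incomp (a ⊓ b) hmA hm0 hm1 a haB ha0 ha1).1 inf_le_left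
  · have hm1 : a ⊓ b ≠ ⊤ := fun h' => hb1 (top_le_iff.1 (h' ▸ inf_le_right))
    exact (hAB.incomp b hbA hb0 hb1 (a ⊓ b) hmB hm0 hm1).2 inf_le_right

lemma isFilterOf_of_subset {A F : Set C} (hF : IsLatFilter F) (hFA : F ⊆ A) :
    IsFilterOf A F :=
  ⟨hF.1, hFA, fun x hx y _ hxy => hF.2.1 x hx y hxy, hF.2.2⟩

lemma isLatFilter_of_isFilterOf {A B : Set C} (hAB : IsHorizSum A B) {F : Set C}
    (hF : IsFilterOf A F) (hbot : ⊥ ∉ F) : IsLatFilter F := by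
  refine ⟨hF.1, ?_, hF.2.2.2⟩
  intro x hx y hxy
  have hxA : x ∈ A := hF.2.1 hx
  by_cases hyA : y ∈ A
  · exact hF.2.2.1 x hx y hyA hxy
  · have hyB : y ∈ B := by
      have : y ∈ A ∪ B := hAB.union ▸ Set.mem_univ y
      exact this.resolve_left hyA
    have hx0 : x ≠ ⊥ := fun h' => hbot (h' ▸ hx)
    have hx1 : x ≠ ⊤ := by
      intro h'
      subst h'
      exact hyA (by rw [top_le_iff.1 hxy]; exact hAB.topA)
    have hy0 : y ≠ ⊥ := fun h' => hyA (h' ▸ hAB.botA)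
    have hy1 : y ≠ ⊤ := fun h' => hyA (h' ▸ hAB.topA)
    exact absurd hxy (hAB.incomp x hxA hx0 hx1 y hyB hy0 hy1).1

lemma filterOf_eq_of_bot_mem {A F : Set C} (hF : IsFilterOf A F) (h : ⊥ ∈ F) : F = A :=
  Set.Subset.antisymm hF.2.1 fun y hy => hF.2.2.1 ⊥ h y hy bot_le

lemma isFilterOf_self {A : Set C} (htop : ⊤ ∈ A)
    (hsub : ∀ x ∈ A, ∀ y ∈ A, x ⊓ y ∈ A ∧ x ⊔ y ∈ A) : IsFilterOf A A :=
  ⟨⟨⊤, htop⟩, le_refl _, fun _ _ y hy _ => hy, fun x hx y hy => (hsub x hx y hy).1⟩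

lemma isFilterOf_top {A : Set C} (htop : ⊤ ∈ A) : IsFilterOf A {⊤} := by
  refine ⟨⟨⊤, rfl⟩, Set.singleton_subset_iff.2 htop, ?_, ?_⟩
  · intro x hx y _ hxy
    rw [Set.mem_singleton_iff] at hx ⊢
    exact top_le_iff.1 (hx ▸ hxy)
  · intro x hx y hy
    rw [Set.mem_singleton_iff] at hx hy ⊢
    rw [hx, hy, inf_idem]

lemma main_count {A B : Set C} (hAB : IsHorizSum A B) (hbt : (⊥ : C) ≠ ⊤)
    (hB : ∃ b ∈ B, b ≠ ⊥ ∧ b ≠ ⊤) :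
    Cardinal.mk {F : Set C // IsLatFilter F} + 2 =
      Cardinal.mk {F : Set C // IsFilterOf A F} + Cardinal.mk {F : Set C // IsFilterOf B F} := by
  classical
  obtain ⟨b0, hb0B, hb00, hb01⟩ := hB
  have hb0A : b0 ∉ A := fun h' => by
    have : b0 ∈ A ∩ B := ⟨h', hb0B⟩
    rw [hAB.inter] at this
    rcases this with h'' | h''
    · exact hb00 h''
    · exact hb01 h''
  -- value distinctness facts
  have hBne_top : B ≠ ({⊤} : Set C) := fun h' => hbt (Set.mem_singleton_iff.1 (h' ▸ hAB.botB))
  let f : Option (Option {F : Set C // IsLatFilter F}) →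
      {F : Set C // IsFilterOf A F} ⊕ {F : Set C // IsFilterOf B F} :=
    fun o => match o with
    | none => Sum.inr ⟨B, isFilterOf_self hAB.topB hAB.subB⟩
    | some none => Sum.inr ⟨{⊤}, isFilterOf_top hAB.topB⟩
    | some (some ⟨F, hF⟩) =>
        if hu : F = Set.univ then Sum.inl ⟨A, isFilterOf_self hAB.topA hAB.subA⟩
        else if hFA : F ⊆ A then Sum.inl ⟨F, isFilterOf_of_subset hF hFA⟩
        else Sum.inr ⟨F, isFilterOf_of_subset hF
          ((latFilter_subset hAB hF hu).resolve_left hFA)⟩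
  -- key: a lat filter F ≠ univ with F ⊆ A cannot equal A; similarly for B; etc.
  have hne_A : ∀ (F : Set C), IsLatFilter F → F ≠ Set.univ → F ≠ A :=
    fun F hF hu h' => hu (latFilter_eq_univ_of_bot hF (h' ▸ hAB.botA))
  have hne_B : ∀ (F : Set C), IsLatFilter F → F ≠ Set.univ → F ≠ B :=
    fun F hF hu h' => hu (latFilter_eq_univ_of_bot hF (h' ▸ hAB.botB))
  have hinj : Function.Injective f := by
    rintro (_ | (_ | ⟨F, hF⟩)) (_ | (_ | ⟨G, hG⟩)) h <;> simp only [f] at h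
    · rfl
    · simp only [Sum.inr.injEq, Subtype.mk.injEq] at h
      exact absurd h hBne_top
    · by_cases hu : G = Set.univ
      · rw [dif_pos hu] at h; simp at h
      · rw [dif_neg hu] at h
        by_cases hGA : G ⊆ A
        · rw [dif_pos hGA] at h; simp at h
        · rw [dif_neg hGA] at h
          simp only [Sum.inr.injEq, Subtype.mk.injEq] at h
          exact absurd h.symm (hne_B G hG hu)
    · simp only [Sum.inr.injEq, Subtype.mk.injEq] at h
      exact absurd h.symm hBne_top
    · rfl
    · by_cases hu : G = Set.univ
      · rw [dif_pos hu] at h; simp at h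
      · rw [dif_neg hu] at h
        by_cases hGA : G ⊆ A
        · rw [dif_pos hGA] at h; simp at h
        · rw [dif_neg hGA] at h
          simp only [Sum.inr.injEq, Subtype.mk.injEq] at h
          exact absurd (h ▸ Set.singleton_subset_iff.2 hAB.topA) hGA
    · by_cases hu : F = Set.univ
      · rw [dif_pos hu] at h; simp at h
      · rw [dif_neg hu] at h
        by_cases hFA : F ⊆ A
        · rw [dif_pos hFA] at h; simp at h
        · rw [dif_neg hFA] at h
          simp only [Sum.inr.injEq, Subtype.mk.injEq] at h
          exact absurd h (hne_B F hF hu)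
    · by_cases hu : F = Set.univ
      · rw [dif_pos hu] at h; simp at h
      · rw [dif_neg hu] at h
        by_cases hFA : F ⊆ A
        · rw [dif_pos hFA] at h; simp at h
        · rw [dif_neg hFA] at h
          simp only [Sum.inr.injEq, Subtype.mk.injEq] at h
          exact absurd (h ▸ Set.singleton_subset_iff.2 hAB.topA) hFA
    · by_cases hu1 : F = Set.univ <;> by_cases hu2 : G = Set.univ
      · exact congrArg some (congrArg some (Subtype.ext (hu1.trans hu2.symm)))
      · rw [dif_pos hu1, dif_neg hu2] at h
        by_cases hGA : G ⊆ A
        · rw [dif_pos hGA] at h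
          simp only [Sum.inl.injEq, Subtype.mk.injEq] at h
          exact absurd h.symm (hne_A G hG hu2)
        · rw [dif_neg hGA] at h; simp at h
      · rw [dif_neg hu1, dif_pos hu2] at h
        by_cases hFA : F ⊆ A
        · rw [dif_pos hFA] at h
          simp only [Sum.inl.injEq, Subtype.mk.injEq] at h
          exact absurd h (hne_A F hF hu1)
        · rw [dif_neg hFA] at h; simp at h
      · rw [dif_neg hu1, dif_neg hu2] at h
        by_cases hFA : F ⊆ A <;> by_cases hGA : G ⊆ A
        · rw [dif_pos hFA, dif_pos hGA] at h
          simp only [Sum.inl.injEq, Subtype.mk.injEq] at h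
          exact congrArg some (congrArg some (Subtype.ext h))
        · rw [dif_pos hFA, dif_neg hGA] at h; simp at h
        · rw [dif_neg hFA, dif_pos hGA] at h; simp at h
        · rw [dif_neg hFA, dif_neg hGA] at h
          simp only [Sum.inr.injEq, Subtype.mk.injEq] at h
          exact congrArg some (congrArg some (Subtype.ext h))
  have hsurj : Function.Surjective f := by
    rintro (⟨G, hG⟩ | ⟨G, hG⟩)
    · by_cases hb : ⊥ ∈ G
      · refine ⟨some (some ⟨Set.univ, isLatFilter_univ⟩), ?_⟩
        simp only [f]
        rw [dif_pos trivial]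
        exact congrArg Sum.inl (Subtype.ext (filterOf_eq_of_bot_mem hG hb).symm)
      · have hGl : IsLatFilter G := isLatFilter_of_isFilterOf hAB hG hb
        have hu : G ≠ Set.univ := fun h' => hb (h' ▸ Set.mem_univ ⊥)
        refine ⟨some (some ⟨G, hGl⟩), ?_⟩
        simp only [f]
        rw [dif_neg hu, dif_pos hG.2.1]
    · by_cases hb : ⊥ ∈ G
      · exact ⟨none, congrArg Sum.inr (Subtype.ext (filterOf_eq_of_bot_mem hG hb).symm)⟩
      · by_cases ht : G = ({⊤} : Set C)
        · exact ⟨some none, congrArg Sum.inr (Subtype.ext ht.symm)⟩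
        · have hGl : IsLatFilter G := isLatFilter_of_isFilterOf hAB.symm' hG hb
          have hu : G ≠ Set.univ := fun h' => hb (h' ▸ Set.mem_univ ⊥)
          have hGA : ¬ G ⊆ A := by
            intro hsub
            apply ht
            have hsub2 : G ⊆ ({⊥, ⊤} : Set C) := by
              rw [← hAB.inter]; exact fun x hx => ⟨hsub hx, hG.2.1 hx⟩
            obtain ⟨g, hg⟩ := hG.1
            have : ∀ x ∈ G, x = ⊤ := by
              intro x hx
              rcases hsub2 hx with h' | h'
              · exact absurd (h' ▸ hx) hb
              · exact h'
            ext x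
            simp only [Set.mem_singleton_iff]
            exact ⟨fun hx => this x hx, fun hx => hx ▸ (this g hg ▸ hg)⟩
          refine ⟨some (some ⟨G, hGl⟩), ?_⟩
          simp only [f]
          rw [dif_neg hu, dif_neg hGA]
  have e := Equiv.ofBijective f ⟨hinj, hsurj⟩
  have hcard := Cardinal.mk_congr e
  simp only [Cardinal.mk_option, Cardinal.mk_sum, Cardinal.lift_id] at hcard
  rw [← hcard]
  ring

end Aux

/-- For nontrivial bounded lattices `A` and `B` each containing an element distinct from
`⊥` and `⊤`, the number of filters of the horizontal sum `A ⊞ B` equals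
`|Filt(A)| + |Filt(B)| − 2`, and dually for ideals. -/
theorem card_filters_ideals_horizSum {C : Type*} [Lattice C] [BoundedOrder C]
    (A B : Set C) (hAB : IsHorizSum A B) (hbt : (⊥ : C) ≠ ⊤)
    (hA : ∃ a ∈ A, a ≠ ⊥ ∧ a ≠ ⊤) (hB : ∃ b ∈ B, b ≠ ⊥ ∧ b ≠ ⊤) :
    Cardinal.mk {F : Set C // IsLatFilter F} + 2 =
      Cardinal.mk {F : Set C // IsFilterOf A F} + Cardinal.mk {F : Set C // IsFilterOf B F} ∧
    Cardinal.mk {I : Set C // IsLatIdeal I} + 2 =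
      Cardinal.mk {I : Set C // IsIdealOf A I} + Cardinal.mk {I : Set C // IsIdealOf B I} := by
  obtain ⟨b0, hb0B, hb00, hb01⟩ := hB
  constructor
  · exact main_count hAB hbt ⟨b0, hb0B, hb00, hb01⟩
  · exact main_count (C := Cᵒᵈ) hAB.dual'
      (fun h => hbt (congrArg OrderDual.ofDual h).symm)
      ⟨OrderDual.toDual b0, hb0B, fun h => hb01 (congrArg OrderDual.ofDual h),
        fun h => hb00 (congrArg OrderDual.ofDual h)⟩
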